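/- Let (S, φ) be an LP-Type problem of dimension δ with |S| = n, and let R be a uniformly random subset of size r. Then the expected number of violators satisfies E[|V(R)|] ≤ δ(n − r)/(r + 1). -/

import Mathlib

open Finset

/-- In an LP-Type problem of dimension δ with |S| = n, the expected number of
violators of a uniformly random subset of size r is at most δ(n-r)/(r+1). -/
theorem expected_violators_le {α β : Type*} [DecidableEq α] [DecidableEq β] [LinearOrder β]
    (S : Finset α) (n : ℕ) (hn : S.card = n) (φ : Finset α → β) (δ : ℕ)
    (hmono : ∀ A B : Finset α, A ⊆ B → φ A ≤ φ B)
    (hloc : ∀ (A B : Finset α) (x : α), A ⊆ B → φ A = φ B →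
      φ A = φ (insert x A) → φ A = φ (insert x B))
    (hdim : ∀ B : Finset α, B ⊆ S → (∀ B' : Finset α, B' ⊂ B → φ B' < φ B) →
      B.card ≤ δ)
    (r : ℕ) (hr : r ≤ n) :
    (∑ R ∈ S.powersetCard r,
        (((S \ R).filter (fun s => φ (insert s R) ≠ φ R)).card : ℝ)) / (n.choose r)
      ≤ (δ : ℝ) * ((n : ℝ) - r) / ((r : ℝ) + 1) := by
  -- Step 1: double counting
  have hsum : ∑ R ∈ S.powersetCard r, ((S \ R).filter (fun s => φ (insert s R) ≠ φ R)).card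
      = ∑ Q ∈ S.powersetCard (r+1), (Q.filter (fun s => φ (Q.erase s) ≠ φ Q)).card := by
    rw [← Finset.card_sigma, ← Finset.card_sigma]
    refine Finset.card_nbij' (fun p => ⟨insert p.2 p.1, p.2⟩) (fun p => ⟨p.1.erase p.2, p.2⟩)
      ?_ ?_ ?_ ?_
    · rintro ⟨R, s⟩ hp
      simp only [Finset.mem_coe, Finset.mem_sigma, Finset.mem_powersetCard, Finset.mem_filter,
        Finset.mem_sdiff] at hp ⊢
      obtain ⟨⟨hRS, hRcard⟩, ⟨hsS, hsR⟩, hφ⟩ := hp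
      have hQ : insert s R ⊆ S := Finset.insert_subset hsS hRS
      have her : (insert s R).erase s = R := Finset.erase_insert hsR
      refine ⟨⟨hQ, ?_⟩, Finset.mem_insert_self _ _, ?_⟩
      · rw [Finset.card_insert_of_notMem hsR, hRcard]
      · rw [her]; exact fun h => hφ h.symm
    · rintro ⟨Q, s⟩ hp
      simp only [Finset.mem_coe, Finset.mem_sigma, Finset.mem_powersetCard, Finset.mem_filter,
        Finset.mem_sdiff] at hp ⊢
      obtain ⟨⟨hQS, hQcard⟩, hsQ, hφ⟩ := hp
      have hins : insert s (Q.erase s) = Q := Finset.insert_erase hsQ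
      refine ⟨⟨(Finset.erase_subset _ _).trans hQS, ?_⟩,
        ⟨hQS hsQ, Finset.notMem_erase _ _⟩, ?_⟩
      · rw [Finset.card_erase_of_mem hsQ, hQcard]; rfl
      · rw [hins]; exact fun h => hφ h.symm
    · rintro ⟨R, s⟩ hp
      simp only [Finset.mem_coe, Finset.mem_sigma, Finset.mem_filter, Finset.mem_sdiff] at hp
      simp [Finset.erase_insert hp.2.1.2]
    · rintro ⟨Q, s⟩ hp
      simp only [Finset.mem_coe, Finset.mem_sigma, Finset.mem_filter] at hp
      simp [Finset.insert_erase hp.2.1]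
  -- Step 2: each Q contributes at most δ
  have hbound : ∀ Q ∈ S.powersetCard (r+1),
      (Q.filter (fun s => φ (Q.erase s) ≠ φ Q)).card ≤ δ := by
    intro Q hQ
    rw [Finset.mem_powersetCard] at hQ
    obtain ⟨B, hBmem, hBmin⟩ :=
      Finset.exists_min_image (Q.powerset.filter (fun B => φ B = φ Q)) Finset.card
        ⟨Q, by simp⟩
    simp only [Finset.mem_filter, Finset.mem_powerset] at hBmem
    obtain ⟨hBQ, hBφ⟩ := hBmem
    have hBδ : B.card ≤ δ := by
      refine hdim B (hBQ.trans hQ.1) ?_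
      intro B' hB'
      rcases (hmono _ _ hB'.subset).lt_or_eq with h | h
      · exact h
      · exfalso
        have hmem : B' ∈ Q.powerset.filter (fun B => φ B = φ Q) := by
          simp only [Finset.mem_filter, Finset.mem_powerset]
          exact ⟨hB'.subset.trans hBQ, h.symm ▸ hBφ⟩
        exact absurd (hBmin B' hmem) (not_le.mpr (Finset.card_lt_card hB'))
    refine le_trans (Finset.card_le_card ?_) hBδ
    intro x hx
    rw [Finset.mem_filter] at hx
    by_contra hxB
    apply hx.2
    have hBsub : B ⊆ Q.erase x := fun b hb =>
      Finset.mem_erase.mpr ⟨fun h => hxB (h ▸ hb), hBQ hb⟩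
    exact le_antisymm (hmono _ _ (Finset.erase_subset _ _))
      (hBφ ▸ hmono _ _ hBsub)
  -- Step 3: sum the bounds
  have htot : (∑ R ∈ S.powersetCard r,
      ((S \ R).filter (fun s => φ (insert s R) ≠ φ R)).card) ≤ n.choose (r+1) * δ := by
    rw [hsum]
    calc ∑ Q ∈ S.powersetCard (r+1), (Q.filter (fun s => φ (Q.erase s) ≠ φ Q)).card
        ≤ ∑ _Q ∈ S.powersetCard (r+1), δ := Finset.sum_le_sum hbound
      _ = n.choose (r+1) * δ := by
          rw [Finset.sum_const, Finset.card_powersetCard, hn, smul_eq_mul]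
  -- Step 4: arithmetic
  have hchoose : (0:ℝ) < (n.choose r : ℝ) := by
    exact_mod_cast Nat.choose_pos hr
  have hr1 : (0:ℝ) < (r:ℝ) + 1 := by positivity
  rw [div_le_div_iff₀ hchoose hr1]
  have hcast : (∑ R ∈ S.powersetCard r,
      (((S \ R).filter (fun s => φ (insert s R) ≠ φ R)).card : ℝ))
      = ((∑ R ∈ S.powersetCard r,
        ((S \ R).filter (fun s => φ (insert s R) ≠ φ R)).card : ℕ) : ℝ) := by
    push_cast; rfl
  have hle : (∑ R ∈ S.powersetCard r,
      (((S \ R).filter (fun s => φ (insert s R) ≠ φ R)).card : ℝ))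
      ≤ (n.choose (r+1) : ℝ) * δ := by
    rw [hcast]
    exact_mod_cast htot
  have hid : (n.choose (r+1) : ℝ) * ((r:ℝ) + 1) = (n.choose r : ℝ) * ((n:ℝ) - r) := by
    have := Nat.choose_succ_right_eq n r
    have hs : ((n - r : ℕ) : ℝ) = (n:ℝ) - r := by
      rw [Nat.cast_sub hr]
    calc (n.choose (r+1) : ℝ) * ((r:ℝ) + 1)
        = ((n.choose (r+1) * (r+1) : ℕ) : ℝ) := by push_cast; ring
      _ = ((n.choose r * (n - r) : ℕ) : ℝ) := by rw [this]
      _ = (n.choose r : ℝ) * ((n:ℝ) - r) := by push_cast [Nat.cast_sub hr]; ring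
  calc (∑ R ∈ S.powersetCard r,
      (((S \ R).filter (fun s => φ (insert s R) ≠ φ R)).card : ℝ)) * ((r:ℝ) + 1)
      ≤ (n.choose (r+1) : ℝ) * δ * ((r:ℝ) + 1) := by
        exact mul_le_mul_of_nonneg_right hle (le_of_lt hr1)
    _ = (δ : ℝ) * ((n.choose (r+1) : ℝ) * ((r:ℝ) + 1)) := by ring
    _ = (δ : ℝ) * ((n.choose r : ℝ) * ((n:ℝ) - r)) := by rw [hid]
    _ = (δ : ℝ) * ((n:ℝ) - r) * (n.choose r : ℝ) := by ring
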